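/- Let G_w be an edge-weighted graph and e = {e_1,...,e_{t-1}} a collection of edges of G that is connected when viewed as a subgraph of G, such that the induced subgraph G[e] on the closed neighborhood N[e] is bipartite, and the weight function w is trivial (identically 1) on all edges in the closed neighborhood of e. Then I(G_w)^t : (e_1 ⋯ e_{t-1}) = I( (bipartite completion of G with respect to e)_{w'} ), where w' extends w by assigning weight 1 to all new edges. -/

import Mathlib

open MvPolynomial

/-- The edge ideal of an edge-weighted graph `G_w`. -/
noncomputable def edgeIdealW {V K : Type*} [Field K] (G : SimpleGraph V) (w : V → V → ℕ) :
    Ideal (MvPolynomial V K) :=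
  Ideal.span {p | ∃ i j, G.Adj i j ∧ p = (X i * X j) ^ w i j}

/-- The subgraph of `G` determined by a collection of edges `es` of `G`. -/
def edgesSubgraph {V : Type*} (G : SimpleGraph V) {m : ℕ} (es : Fin m → V × V)
    (h : ∀ k, G.Adj (es k).1 (es k).2) : G.Subgraph where
  verts := {v | ∃ k, (es k).1 = v ∨ (es k).2 = v}
  Adj i j := ∃ k, es k = (i, j) ∨ es k = (j, i)
  adj_sub := by
    rintro i j ⟨k, hk | hk⟩
    · have := h k; rw [hk] at this; exact this
    · have := h k; rw [hk] at this; exact this.symm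
  edge_vert := by
    rintro i j ⟨k, hk | hk⟩
    · exact ⟨k, Or.inl (by rw [hk])⟩
    · exact ⟨k, Or.inr (by rw [hk])⟩
  symm := ⟨fun i j ⟨k, hk⟩ => ⟨k, hk.elim Or.inr Or.inl⟩⟩

/-- The closed neighbourhood `N[e]` of a collection of edges `es`: all vertices lying in
some edge of `es` or adjacent to such a vertex. -/
def closedNbhd {V : Type*} (G : SimpleGraph V) {m : ℕ} (es : Fin m → V × V) : Set V :=
  {v | (∃ k, (es k).1 = v ∨ (es k).2 = v) ∨
    ∃ u, (∃ k, (es k).1 = u ∨ (es k).2 = u) ∧ G.Adj u v}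

open scoped Classical

section AuxGeneral

variable {V K : Type*} [Field K]

/-- Exponent vectors of the generators of a weighted edge ideal. -/
def expSet (G : SimpleGraph V) (w : V → V → ℕ) : Set (V →₀ ℕ) :=
  {e | ∃ i j, G.Adj i j ∧ e = w i j • (Finsupp.single i 1 + Finsupp.single j 1)}

lemma edge_pow_eq_monomial (i j : V) (n : ℕ) :
    ((X i * X j : MvPolynomial V K)) ^ n
      = monomial (n • (Finsupp.single i 1 + Finsupp.single j 1)) (1 : K) := by
  rw [X, X, monomial_mul, one_mul, monomial_pow, one_pow]

lemma edgeIdealW_eq_span (G : SimpleGraph V) (w : V → V → ℕ) :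
    Ideal.span {p : MvPolynomial V K | ∃ i j, G.Adj i j ∧ p = (X i * X j) ^ w i j}
      = Ideal.span ((fun s => monomial s (1 : K)) '' expSet G w) := by
  congr 1
  ext p
  constructor
  · rintro ⟨i, j, h, rfl⟩
    exact ⟨_, ⟨i, j, h, rfl⟩, (edge_pow_eq_monomial i j (w i j)).symm⟩
  · rintro ⟨_, ⟨i, j, h, rfl⟩, rfl⟩
    exact ⟨i, j, h, (edge_pow_eq_monomial i j (w i j)).symm⟩



/-- `n`-fold sumsets. -/
def sumsOf (S : Set (V →₀ ℕ)) : ℕ → Set (V →₀ ℕ)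
  | 0 => {0}
  | n + 1 => {e | ∃ a ∈ S, ∃ b ∈ sumsOf S n, e = a + b}

lemma span_monomial_pow (S : Set (V →₀ ℕ)) (n : ℕ) :
    (Ideal.span ((fun s => monomial s (1 : K)) '' S)) ^ n
      = Ideal.span ((fun s => monomial s (1 : K)) '' sumsOf S n) := by
  induction n with
  | zero =>
      simp only [pow_zero, sumsOf, Set.image_singleton]
      rw [monomial_zero', C_1, Ideal.span_singleton_one, Ideal.one_eq_top]
  | succ n ih =>
      rw [pow_succ, ih, Ideal.span_mul_span']
      congr 1
      ext p
      constructor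
      · rintro ⟨_, ⟨a, ha, rfl⟩, _, ⟨b, hb, rfl⟩, rfl⟩
        refine ⟨_, ⟨b, hb, a, ha, rfl⟩, ?_⟩
        show monomial (b + a) (1:K) = monomial a 1 * monomial b 1
        rw [monomial_mul, one_mul, add_comm]
      · rintro ⟨x, ⟨b, hb, a, ha, rfl⟩, rfl⟩
        refine ⟨_, ⟨a, ha, rfl⟩, _, ⟨b, hb, rfl⟩, ?_⟩
        show monomial a (1:K) * monomial b 1 = monomial (b + a) 1
        rw [monomial_mul, one_mul, add_comm]

lemma multiset_sum_mem_sumsOf {S : Set (V →₀ ℕ)} :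
    ∀ (n : ℕ) (L : Multiset (V →₀ ℕ)), (∀ x ∈ L, x ∈ S) → L.card = n →
      L.sum ∈ sumsOf S n := by
  intro n
  induction n with
  | zero =>
      intro L _ hc
      rw [Multiset.card_eq_zero] at hc
      subst hc
      simp [sumsOf]
  | succ n ih =>
      intro L hL hc
      have hpos : 0 < Multiset.card L := by omega
      obtain ⟨a, ha⟩ := Multiset.card_pos_iff_exists_mem.mp hpos
      obtain ⟨L', rfl⟩ := Multiset.exists_cons_of_mem ha
      rw [Multiset.card_cons] at hc
      refine ⟨a, hL a (Multiset.mem_cons_self _ _), L'.sum,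
        ih L' (fun x hx => hL x (Multiset.mem_cons_of_mem hx)) (by omega), ?_⟩
      rw [Multiset.sum_cons]

lemma exists_multiset_of_mem_sumsOf {S : Set (V →₀ ℕ)} :
    ∀ (n : ℕ) (e : V →₀ ℕ), e ∈ sumsOf S n →
      ∃ L : Multiset (V →₀ ℕ), (∀ x ∈ L, x ∈ S) ∧ L.card = n ∧ e = L.sum := by
  intro n
  induction n with
  | zero =>
      intro e he
      refine ⟨0, by simp, by simp, ?_⟩
      simpa [sumsOf] using he
  | succ n ih =>
      rintro e ⟨a, ha, b, hb, rfl⟩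
      obtain ⟨L, hL, hc, rfl⟩ := ih b hb
      exact ⟨a ::ₘ L, by
        intro x hx
        rcases Multiset.mem_cons.mp hx with rfl | hx
        · exact ha
        · exact hL x hx, by simp [hc], by rw [Multiset.sum_cons]⟩

/-- counting the total multiplicity of a finsupp inside a set -/
noncomputable def countIn (A : Set V) (ν : V →₀ ℕ) : ℕ :=
  ν.sum fun v n => if v ∈ A then n else 0

lemma countIn_zero (A : Set V) : countIn A 0 = 0 := Finsupp.sum_zero_index

lemma countIn_add (A : Set V) (a b : V →₀ ℕ) :
    countIn A (a + b) = countIn A a + countIn A b :=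
  Finsupp.sum_add_index' (fun _ => by simp) (fun _ b₁ b₂ => by split <;> simp)

lemma countIn_single (A : Set V) (v : V) :
    countIn A (Finsupp.single v 1) = if v ∈ A then 1 else 0 :=
  Finsupp.sum_single_index (by simp)

lemma countIn_mono (A : Set V) {a b : V →₀ ℕ} (h : a ≤ b) :
    countIn A a ≤ countIn A b := by
  obtain ⟨c, rfl⟩ := le_iff_exists_add.mp h
  rw [countIn_add]
  exact Nat.le_add_right _ _

lemma countIn_multiset_sum (A : Set V) (L : Multiset (V →₀ ℕ))
    (h : ∀ x ∈ L, countIn A x = 1) : countIn A L.sum = Multiset.card L := by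
  induction L using Multiset.induction with
  | empty => simp [countIn_zero]
  | cons a L ih =>
      rw [Multiset.sum_cons, countIn_add, h a (Multiset.mem_cons_self _ _),
        ih (fun x hx => h x (Multiset.mem_cons_of_mem hx)), Multiset.card_cons]
      omega

lemma countIn_finset_sum {α : Type*} (A : Set V) (s : Finset α) (f : α → (V →₀ ℕ)) :
    countIn A (∑ k ∈ s, f k) = ∑ k ∈ s, countIn A (f k) := by
  induction s using Finset.cons_induction with
  | empty => simp [countIn_zero]
  | cons a s ha ih => rw [Finset.sum_cons, Finset.sum_cons, countIn_add, ih]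

lemma exists_pos_of_countIn_pos (A : Set V) (d : V →₀ ℕ) (h : 0 < countIn A d) :
    ∃ v, v ∈ A ∧ 0 < d v := by
  by_contra hc
  push_neg at hc
  have : countIn A d = 0 := by
    apply Finset.sum_eq_zero
    intro v _
    show (if v ∈ A then d v else 0) = 0
    by_cases hv : v ∈ A
    · simp only [if_pos hv]
      exact Nat.eq_zero_of_le_zero (hc v hv)
    · simp only [if_neg hv]
  omega

lemma support_mul_monomial (f : MvPolynomial V K) (p0 : V →₀ ℕ) :
    (f * monomial p0 1).support = f.support.map (addRightEmbedding p0) :=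
  AddMonoidAlgebra.support_coeff_mul_single f 1 (fun y => by simp) p0

lemma prod_monomials {α : Type*} (s : Finset α) (f : α → (V →₀ ℕ)) :
    (∏ a ∈ s, monomial (f a) (1 : K)) = monomial (∑ a ∈ s, f a) 1 := by
  induction s using Finset.cons_induction with
  | empty => simp [monomial_zero', C_1]
  | cons a s ha ih =>
      rw [Finset.prod_cons, Finset.sum_cons, ih, monomial_mul, one_mul]

end AuxGeneral

section Comb

variable {V : Type*} {m : ℕ}

/-- vertex set of the edge collection -/
def Wset (es : Fin m → V × V) : Set V := {v | ∃ k, (es k).1 = v ∨ (es k).2 = v}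

/-- exponent vector of the `k`-th edge -/
noncomputable def eVec (es : Fin m → V × V) (k : Fin m) : V →₀ ℕ :=
  Finsupp.single (es k).1 1 + Finsupp.single (es k).2 1

/-- exponent vector of the product of all edge monomials -/
noncomputable def pZero (es : Fin m → V × V) : V →₀ ℕ := ∑ k, eVec es k

variable (G : SimpleGraph V) (es : Fin m → V × V)

lemma fst_mem_W (k) : (es k).1 ∈ Wset es := ⟨k, Or.inl rfl⟩
lemma snd_mem_W (k) : (es k).2 ∈ Wset es := ⟨k, Or.inr rfl⟩

lemma mem_closed_of_W {v} (h : v ∈ Wset es) : v ∈ closedNbhd G es := Or.inl h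

lemma mem_closed_of_adjW {u v} (hu : u ∈ Wset es) (h : G.Adj u v) :
    v ∈ closedNbhd G es := Or.inr ⟨u, hu, h⟩

lemma pZero_apply_eq_zero {v} (h : v ∉ Wset es) : pZero es v = 0 := by
  rw [pZero, Finsupp.finset_sum_apply]
  refine Finset.sum_eq_zero fun k _ => ?_
  rw [eVec, Finsupp.add_apply, Finsupp.single_apply, Finsupp.single_apply,
    if_neg (fun hh => h ⟨k, Or.inl hh⟩), if_neg (fun hh => h ⟨k, Or.inr hh⟩)]
  rfl

variable (w : V → V → ℕ) (U V' : Set V)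

lemma forward_lemma {t : ℕ} (ht : 2 ≤ t) (es : Fin (t-1) → V × V)
    (hes : ∀ k, G.Adj (es k).1 (es k).2)
    (hUV : U ∪ V' = closedNbhd G es) (hdisj : Disjoint U V')
    (hbip : ∀ i j, G.Adj i j → i ∈ closedNbhd G es → j ∈ closedNbhd G es →
      (i ∈ U ∧ j ∈ V') ∨ (i ∈ V' ∧ j ∈ U))
    (htriv : ∀ i j, G.Adj i j → i ∈ closedNbhd G es → j ∈ closedNbhd G es → w i j = 1)
    (d e : V →₀ ℕ) (he : e ∈ sumsOf (expSet G w) t) (hle : e ≤ pZero es + d) :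
    ∃ e' ∈ expSet (G ⊔ SimpleGraph.fromRel fun i j => i ∈ U ∧ j ∈ V')
      (fun i j => if G.Adj i j then w i j else 1), e' ≤ d := by
  obtain ⟨L, hL, hcard, rfl⟩ := exists_multiset_of_mem_sumsOf t e he
  by_cases hdone : ∃ e' ∈ expSet (G ⊔ SimpleGraph.fromRel fun i j => i ∈ U ∧ j ∈ V')
      (fun i j => if G.Adj i j then w i j else 1), e' ≤ d
  · exact hdone
  exfalso
  -- every element of `L` has weight one and opposite-sides endpoints
  have hcount : ∀ x ∈ L, countIn U x = 1 ∧ countIn V' x = 1 := by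
    intro x hxL
    obtain ⟨i, j, hij, hxf⟩ := hL x hxL
    have hW : i ∈ Wset es ∨ j ∈ Wset es := by
      by_contra hW
      push_neg at hW
      apply hdone
      have hxd : x ≤ d := by
        rw [Finsupp.le_def]
        intro v
        by_cases hv : v = i ∨ v = j
        · have hvW : v ∉ Wset es := by rcases hv with rfl | rfl
                                       · exact hW.1
                                       · exact hW.2
          have h1 : x v ≤ L.sum v := by
            obtain ⟨L', rfl⟩ := Multiset.exists_cons_of_mem hxL
            rw [Multiset.sum_cons]
            exact (Finsupp.le_def.mp (self_le_add_right x L'.sum)) v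
          have h2 := (Finsupp.le_def.mp hle) v
          rw [Finsupp.add_apply, pZero_apply_eq_zero es hvW, zero_add] at h2
          exact le_trans h1 h2
        · push_neg at hv
          have : x v = 0 := by
            rw [hxf, Finsupp.smul_apply, Finsupp.add_apply, Finsupp.single_apply,
              Finsupp.single_apply, if_neg (fun hh => hv.1 hh.symm),
              if_neg (fun hh => hv.2 hh.symm)]
            simp
          simp [this]
      refine ⟨x, ⟨i, j, ?_, ?_⟩, hxd⟩
      · exact (SimpleGraph.sup_adj _ _ _ _).mpr (Or.inl hij)
      · show x = (if G.Adj i j then w i j else 1) • (Finsupp.single i 1 + Finsupp.single j 1)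
        rw [if_pos hij]; exact hxf
    have hiN : i ∈ closedNbhd G es ∧ j ∈ closedNbhd G es := by
      rcases hW with hiW | hjW
      · exact ⟨mem_closed_of_W G es hiW, mem_closed_of_adjW G es hiW hij⟩
      · exact ⟨mem_closed_of_adjW G es hjW hij.symm, mem_closed_of_W G es hjW⟩
    have hw1 : w i j = 1 := htriv i j hij hiN.1 hiN.2
    have hxf' : x = Finsupp.single i 1 + Finsupp.single j 1 := by
      rw [hxf, hw1, one_smul]
    rcases hbip i j hij hiN.1 hiN.2 with ⟨hiU, hjV⟩ | ⟨hiV, hjU⟩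
    · constructor
      · rw [hxf', countIn_add, countIn_single, countIn_single, if_pos hiU,
          if_neg (Set.disjoint_right.mp hdisj hjV)]
      · rw [hxf', countIn_add, countIn_single, countIn_single, if_pos hjV,
          if_neg (Set.disjoint_left.mp hdisj hiU)]
    · constructor
      · rw [hxf', countIn_add, countIn_single, countIn_single, if_pos hjU,
          if_neg (Set.disjoint_right.mp hdisj hiV)]
      · rw [hxf', countIn_add, countIn_single, countIn_single, if_pos hiV,
          if_neg (Set.disjoint_left.mp hdisj hjU)]
  -- each edge of `es` has one endpoint in U and one in V'
  have hpZ : countIn U (pZero es) = t - 1 ∧ countIn V' (pZero es) = t - 1 := by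
    have h1 : ∀ k, countIn U (eVec es k) = 1 ∧ countIn V' (eVec es k) = 1 := by
      intro k
      have h1N := mem_closed_of_W G es (fst_mem_W es k)
      have h2N := mem_closed_of_W G es (snd_mem_W es k)
      rcases hbip _ _ (hes k) h1N h2N with ⟨hU1, hV2⟩ | ⟨hV1, hU2⟩
      · constructor
        · rw [eVec, countIn_add, countIn_single, countIn_single, if_pos hU1,
            if_neg (Set.disjoint_right.mp hdisj hV2)]
        · rw [eVec, countIn_add, countIn_single, countIn_single, if_pos hV2,
            if_neg (Set.disjoint_left.mp hdisj hU1)]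
      · constructor
        · rw [eVec, countIn_add, countIn_single, countIn_single, if_pos hU2,
            if_neg (Set.disjoint_right.mp hdisj hV1)]
        · rw [eVec, countIn_add, countIn_single, countIn_single, if_pos hV1,
            if_neg (Set.disjoint_left.mp hdisj hU2)]
    constructor
    · rw [pZero, countIn_finset_sum]
      rw [Finset.sum_congr rfl (fun k _ => (h1 k).1), Finset.sum_const, smul_eq_mul, mul_one,
        Finset.card_univ, Fintype.card_fin]
    · rw [pZero, countIn_finset_sum]
      rw [Finset.sum_congr rfl (fun k _ => (h1 k).2), Finset.sum_const, smul_eq_mul, mul_one,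
        Finset.card_univ, Fintype.card_fin]
  have hLU : countIn U L.sum = t := by
    rw [countIn_multiset_sum U L (fun x hx => (hcount x hx).1), hcard]
  have hLV : countIn V' L.sum = t := by
    rw [countIn_multiset_sum V' L (fun x hx => (hcount x hx).2), hcard]
  have hUd : 0 < countIn U d := by
    have := countIn_mono U hle
    rw [hLU, countIn_add, hpZ.1] at this
    omega
  have hVd : 0 < countIn V' d := by
    have := countIn_mono V' hle
    rw [hLV, countIn_add, hpZ.2] at this
    omega
  obtain ⟨i, hiU, hdi⟩ := exists_pos_of_countIn_pos U d hUd
  obtain ⟨j, hjV, hdj⟩ := exists_pos_of_countIn_pos V' d hVd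
  have hne : i ≠ j := fun h => Set.disjoint_left.mp hdisj hiU (h ▸ hjV)
  apply hdone
  refine ⟨Finsupp.single i 1 + Finsupp.single j 1, ⟨i, j, ?_, ?_⟩, ?_⟩
  · exact (SimpleGraph.sup_adj _ _ _ _).mpr (Or.inr ((SimpleGraph.fromRel_adj _ _ _).mpr
      ⟨hne, Or.inl ⟨hiU, hjV⟩⟩))
  · have hw1 : (if G.Adj i j then w i j else 1) = 1 := by
      split
      next hG =>
        have hiN : i ∈ closedNbhd G es := hUV ▸ Or.inl hiU
        have hjN : j ∈ closedNbhd G es := hUV ▸ Or.inr hjV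
        exact htriv i j hG hiN hjN
      next => rfl
    show _ = (if G.Adj i j then w i j else 1) • (Finsupp.single i 1 + Finsupp.single j 1)
    rw [hw1, one_smul]
  · rw [Finsupp.le_def]
    intro v
    rw [Finsupp.add_apply, Finsupp.single_apply, Finsupp.single_apply]
    by_cases hvi : i = v
    · subst hvi
      rw [if_pos rfl, if_neg (fun h : j = i => hne h.symm)]
      omega
    · rw [if_neg hvi]
      by_cases hvj : j = v
      · subst hvj
        rw [if_pos rfl]
        omega
      · rw [if_neg hvj]
        omega



variable {t : ℕ} (es' : Fin (t - 1) → V × V) (hes : ∀ k, G.Adj (es' k).1 (es' k).2)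

/-- if `x ∈ U` then its neighbours inside `N[e]` lie in `V'` -/
lemma oppU {U V' : Set V} (hdisj : Disjoint U V')
    (hbip : ∀ i j, G.Adj i j → i ∈ closedNbhd G es' → j ∈ closedNbhd G es' →
      (i ∈ U ∧ j ∈ V') ∨ (i ∈ V' ∧ j ∈ U)) {x y : V} (hadj : G.Adj x y) (hx : x ∈ closedNbhd G es')
    (hy : y ∈ closedNbhd G es') (hxU : x ∈ U) : y ∈ V' := by
  rcases hbip x y hadj hx hy with ⟨_, h⟩ | ⟨h, _⟩
  · exact h
  · exact absurd hxU (Set.disjoint_right.mp hdisj h)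

lemma oppV {U V' : Set V} (hdisj : Disjoint U V')
    (hbip : ∀ i j, G.Adj i j → i ∈ closedNbhd G es' → j ∈ closedNbhd G es' →
      (i ∈ U ∧ j ∈ V') ∨ (i ∈ V' ∧ j ∈ U)) {x y : V} (hadj : G.Adj x y) (hx : x ∈ closedNbhd G es')
    (hy : y ∈ closedNbhd G es') (hxV : x ∈ V') : y ∈ U := by
  rcases hbip x y hadj hx hy with ⟨h, _⟩ | ⟨_, h⟩
  · exact absurd hxV (Set.disjoint_left.mp hdisj h)
  · exact h

lemma walk_lemma (hdisj : Disjoint U V')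
    (hbip : ∀ i j, G.Adj i j → i ∈ closedNbhd G es' → j ∈ closedNbhd G es' →
      (i ∈ U ∧ j ∈ V') ∨ (i ∈ V' ∧ j ∈ U))
    (htriv : ∀ i j, G.Adj i j → i ∈ closedNbhd G es' → j ∈ closedNbhd G es' → w i j = 1) :
    ∀ (n : ℕ) (a b : (edgesSubgraph G es' hes).verts)
      (p : (edgesSubgraph G es' hes).coe.Walk a b), p.length = n → p.edges.Nodup →
      (↑a : V) ∈ V' → (↑b : V) ∈ U →
      ∃ (ks : Finset (Fin (t - 1))) (D : Multiset (V →₀ ℕ)),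
        (∀ x ∈ D, x ∈ expSet G w) ∧ ks.card = Multiset.card D + 1 ∧
        (∀ k ∈ ks, s((es' k).1, (es' k).2) ∈
          p.edges.map (Sym2.map (Subtype.val))) ∧
        Finsupp.single (↑a : V) 1 + Finsupp.single (↑b : V) 1 + D.sum
          = ∑ k ∈ ks, eVec es' k := by
  intro n
  induction n using Nat.strong_induction_on with
  | _ n ih =>
    intro a b p hlen hnd ha hb
    cases p with
    | nil => exact absurd hb (Set.disjoint_right.mp hdisj ha)
    | @cons _ c _ h₁ q =>
      have hac : (edgesSubgraph G es' hes).Adj ↑a ↑c := h₁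
      have hacG : G.Adj ↑a ↑c := (edgesSubgraph G es' hes).adj_sub hac
      have haW : (↑a : V) ∈ Wset es' := a.2
      have hcW : (↑c : V) ∈ Wset es' := c.2
      have haN : (↑a : V) ∈ closedNbhd G es' := mem_closed_of_W G es' haW
      have hcN : (↑c : V) ∈ closedNbhd G es' := mem_closed_of_W G es' hcW
      have hcU : (↑c : V) ∈ U := oppV G es' hdisj hbip hacG haN hcN ha
      obtain ⟨k₀, hk₀⟩ := hac
      have hk₀e : eVec es' k₀ = Finsupp.single (↑a : V) 1 + Finsupp.single (↑c : V) 1 := by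
        rcases hk₀ with h | h
        · rw [eVec, h]
        · rw [eVec, h, add_comm]
      have hk₀s : s((es' k₀).1, (es' k₀).2) = Sym2.map (Subtype.val) s(a, c) := by
        rw [Sym2.map_pair_eq]
        rcases hk₀ with h | h
        · rw [h]
        · rw [h]
          exact Sym2.eq_swap
      cases q with
      | nil =>
        refine ⟨{k₀}, 0, by simp, by simp, ?_, ?_⟩
        · intro k hk
          rw [Finset.mem_singleton] at hk
          subst hk
          rw [SimpleGraph.Walk.edges_cons, SimpleGraph.Walk.edges_nil, List.map_cons, hk₀s]
          exact List.mem_cons_self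
        · rw [Finset.sum_singleton, hk₀e]
          simp
      | @cons _ c₂ _ h₂ q' =>
        have hcc₂ : (edgesSubgraph G es' hes).Adj ↑c ↑c₂ := h₂
        have hcc₂G : G.Adj ↑c ↑c₂ := (edgesSubgraph G es' hes).adj_sub hcc₂
        have hc₂W : (↑c₂ : V) ∈ Wset es' := c₂.2
        have hc₂N : (↑c₂ : V) ∈ closedNbhd G es' := mem_closed_of_W G es' hc₂W
        have hc₂V : (↑c₂ : V) ∈ V' := oppU G es' hdisj hbip hcc₂G hcN hc₂N hcU
        rw [SimpleGraph.Walk.length_cons, SimpleGraph.Walk.length_cons] at hlen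
        rw [SimpleGraph.Walk.edges_cons, SimpleGraph.Walk.edges_cons] at hnd
        obtain ⟨hnm1, hnd1⟩ := List.nodup_cons.mp hnd
        obtain ⟨hnm2, hnd2⟩ := List.nodup_cons.mp hnd1
        obtain ⟨ks', D', hD'E, hcard', hmem', hsum'⟩ :=
          ih q'.length (by omega) c₂ b q' rfl hnd2 hc₂V hb
        have hk₀new : k₀ ∉ ks' := by
          intro hk
          have h1 := hmem' k₀ hk
          rw [hk₀s] at h1
          obtain ⟨z, hz, hze⟩ := List.mem_map.mp h1
          have hzz : z = s(a, c) := Sym2.map.injective Subtype.val_injective hze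
          subst hzz
          exact hnm1 (List.mem_cons_of_mem _ hz)
        refine ⟨insert k₀ ks',
          (Finsupp.single (↑c : V) 1 + Finsupp.single (↑c₂ : V) 1) ::ₘ D', ?_, ?_, ?_, ?_⟩
        · intro x hx
          rcases Multiset.mem_cons.mp hx with rfl | hx
          · exact ⟨↑c, ↑c₂, hcc₂G, by
              rw [htriv _ _ hcc₂G hcN hc₂N, one_smul]⟩
          · exact hD'E x hx
        · rw [Finset.card_insert_of_notMem hk₀new, Multiset.card_cons, hcard']
        · intro k hk
          rcases Finset.mem_insert.mp hk with rfl | hk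
          · rw [SimpleGraph.Walk.edges_cons, List.map_cons, hk₀s]
            exact List.mem_cons_self
          · have := hmem' k hk
            rw [SimpleGraph.Walk.edges_cons, SimpleGraph.Walk.edges_cons, List.map_cons,
              List.map_cons]
            exact List.mem_cons_of_mem _ (List.mem_cons_of_mem _ this)
        · rw [Finset.sum_insert hk₀new, Multiset.sum_cons, hk₀e, ← hsum']
          abel

lemma pair_mem_sums (ht : 2 ≤ t)
    (hconn : (edgesSubgraph G es' hes).Connected)
    (hUV : U ∪ V' = closedNbhd G es') (hdisj : Disjoint U V')
    (hbip : ∀ i j, G.Adj i j → i ∈ closedNbhd G es' → j ∈ closedNbhd G es' →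
      (i ∈ U ∧ j ∈ V') ∨ (i ∈ V' ∧ j ∈ U))
    (htriv : ∀ i j, G.Adj i j → i ∈ closedNbhd G es' → j ∈ closedNbhd G es' → w i j = 1)
    (i j : V) (hi : i ∈ U) (hj : j ∈ V') :
    (Finsupp.single i 1 + Finsupp.single j 1) + pZero es' ∈ sumsOf (expSet G w) t := by
  have hiN : i ∈ closedNbhd G es' := hUV ▸ Or.inl hi
  have hjN : j ∈ closedNbhd G es' := hUV ▸ Or.inr hj
  -- find a neighbour of i inside W
  have hA : ∃ a, a ∈ Wset es' ∧ G.Adj i a := by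
    rcases hiN with hiW | ⟨u, huW, hu⟩
    · obtain ⟨k, hk⟩ := hiW
      rcases hk with hk | hk
      · exact ⟨(es' k).2, snd_mem_W es' k, hk ▸ hes k⟩
      · exact ⟨(es' k).1, fst_mem_W es' k, (hk ▸ (hes k)).symm⟩
    · exact ⟨u, huW, hu.symm⟩
  obtain ⟨a, haW, hia⟩ := hA
  have haN : a ∈ closedNbhd G es' := mem_closed_of_W G es' haW
  have haV : a ∈ V' := oppU G es' hdisj hbip hia hiN haN hi
  have hB : ∃ b, b ∈ Wset es' ∧ G.Adj b j := by
    rcases hjN with hjW | ⟨u, huW, hu⟩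
    · obtain ⟨k, hk⟩ := hjW
      rcases hk with hk | hk
      · exact ⟨(es' k).2, snd_mem_W es' k, (hk ▸ hes k).symm⟩
      · exact ⟨(es' k).1, fst_mem_W es' k, hk ▸ hes k⟩
    · exact ⟨u, huW, hu⟩
  obtain ⟨b, hbW, hbj⟩ := hB
  have hbN : b ∈ closedNbhd G es' := mem_closed_of_W G es' hbW
  have hbU : b ∈ U := oppV G es' hdisj hbip hbj.symm hjN hbN hj
  -- a walk from a to b in the subgraph
  have hreach := hconn ⟨a, haW⟩ ⟨b, hbW⟩
  obtain ⟨p₀⟩ := hreach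
  let P := p₀.toPath
  have hnd : P.1.edges.Nodup := P.2.isTrail.edges_nodup
  obtain ⟨ks, D, hDE, hcard, _, hsum⟩ :=
    walk_lemma G w U V' es' hes hdisj hbip htriv P.1.length ⟨a, haW⟩ ⟨b, hbW⟩ P.1 rfl hnd haV hbU
  have hkssub : ks.card ≤ t - 1 := by
    have := Finset.card_le_univ ks
    rwa [Fintype.card_fin] at this
  -- assemble the multiset of t generators
  set L : Multiset (V →₀ ℕ) :=
    (Finsupp.single i 1 + Finsupp.single a 1) ::ₘ
      (Finsupp.single b 1 + Finsupp.single j 1) ::ₘ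
      (D + (Finset.univ \ ks).val.map (eVec es')) with hLdef
  have hmembers : ∀ x ∈ L, x ∈ expSet G w := by
    intro x hx
    rcases Multiset.mem_cons.mp hx with rfl | hx
    · exact ⟨i, a, hia, by rw [htriv _ _ hia hiN haN, one_smul]⟩
    rcases Multiset.mem_cons.mp hx with rfl | hx
    · exact ⟨b, j, hbj, by rw [htriv _ _ hbj hbN hjN, one_smul]⟩
    rcases Multiset.mem_add.mp hx with hx | hx
    · exact hDE x hx
    · obtain ⟨k, _, rfl⟩ := Multiset.mem_map.mp hx
      exact ⟨(es' k).1, (es' k).2, hes k, by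
        rw [htriv _ _ (hes k) (mem_closed_of_W G es' (fst_mem_W es' k))
          (mem_closed_of_W G es' (snd_mem_W es' k)), one_smul]
        rfl⟩
  have hcardL : Multiset.card L = t := by
    rw [hLdef, Multiset.card_cons, Multiset.card_cons, Multiset.card_add, Multiset.card_map]
    have h1 : Multiset.card (Finset.univ \ ks).val = (t - 1) - ks.card := by
      show (Finset.univ \ ks).card = _
      rw [Finset.card_sdiff_of_subset (Finset.subset_univ ks), Finset.card_univ, Fintype.card_fin]
    rw [h1]
    omega
  have hsum2 : Finsupp.single a 1 + Finsupp.single b 1 + D.sum = ∑ k ∈ ks, eVec es' k := hsum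
  have hsumL : L.sum = (Finsupp.single i 1 + Finsupp.single j 1) + pZero es' := by
    rw [hLdef, Multiset.sum_cons, Multiset.sum_cons, Multiset.sum_add]
    have hms : ((Finset.univ \ ks).val.map (eVec es')).sum
        = ∑ k ∈ Finset.univ \ ks, eVec es' k := rfl
    have hsd := Finset.sum_sdiff (f := eVec es') (Finset.subset_univ ks)
    rw [hms, pZero, ← hsd, ← hsum2]
    abel
  have hfin := multiset_sum_mem_sumsOf t L hmembers hcardL
  rwa [hsumL] at hfin

lemma backward_lemma (ht : 2 ≤ t)
    (hconn : (edgesSubgraph G es' hes).Connected)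
    (hUV : U ∪ V' = closedNbhd G es') (hdisj : Disjoint U V')
    (hbip : ∀ i j, G.Adj i j → i ∈ closedNbhd G es' → j ∈ closedNbhd G es' →
      (i ∈ U ∧ j ∈ V') ∨ (i ∈ V' ∧ j ∈ U))
    (htriv : ∀ i j, G.Adj i j → i ∈ closedNbhd G es' → j ∈ closedNbhd G es' → w i j = 1)
    (e' : V →₀ ℕ)
    (he' : e' ∈ expSet (G ⊔ SimpleGraph.fromRel fun i j => i ∈ U ∧ j ∈ V')
      (fun i j => if G.Adj i j then w i j else 1)) :
    e' + pZero es' ∈ sumsOf (expSet G w) t := by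
  obtain ⟨i, j, hadj, hform⟩ := he'
  have hevk : ∀ k, eVec es' k ∈ expSet G w := by
    intro k
    exact ⟨(es' k).1, (es' k).2, hes k, by
      rw [htriv _ _ (hes k) (mem_closed_of_W G es' (fst_mem_W es' k))
        (mem_closed_of_W G es' (snd_mem_W es' k)), one_smul]
      rfl⟩
  by_cases hG : G.Adj i j
  · have hform' : e' = w i j • (Finsupp.single i 1 + Finsupp.single j 1) := by
      rw [hform]
      show (if G.Adj i j then w i j else 1) • _ = _
      rw [if_pos hG]
    set L : Multiset (V →₀ ℕ) :=
      (w i j • (Finsupp.single i 1 + Finsupp.single j 1)) ::ₘ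
        Finset.univ.val.map (eVec es') with hLdef
    have hmembers : ∀ x ∈ L, x ∈ expSet G w := by
      intro x hx
      rcases Multiset.mem_cons.mp hx with rfl | hx
      · exact ⟨i, j, hG, rfl⟩
      · obtain ⟨k, _, rfl⟩ := Multiset.mem_map.mp hx
        exact hevk k
    have hcardL : Multiset.card L = t := by
      rw [hLdef, Multiset.card_cons, Multiset.card_map]
      have h1 : Multiset.card (Finset.univ : Finset (Fin (t - 1))).val = t - 1 := by
        show (Finset.univ : Finset (Fin (t - 1))).card = t - 1
        rw [Finset.card_univ, Fintype.card_fin]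
      rw [h1]
      omega
    have hsumL : L.sum = e' + pZero es' := by
      rw [hLdef, Multiset.sum_cons, ← hform']
      congr 1
    have hfin := multiset_sum_mem_sumsOf t L hmembers hcardL
    rwa [hsumL] at hfin
  · have hrel := (SimpleGraph.sup_adj _ _ _ _).mp hadj
    rcases hrel with hG' | hrel
    · exact absurd hG' hG
    obtain ⟨hne, hor⟩ := (SimpleGraph.fromRel_adj _ _ _).mp hrel
    have hform1 : e' = Finsupp.single i 1 + Finsupp.single j 1 := by
      rw [hform]
      show (if G.Adj i j then w i j else 1) • _ = _
      rw [if_neg hG, one_smul]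
    rcases hor with ⟨hiU, hjV⟩ | ⟨hjU, hiV⟩
    · rw [hform1]
      exact pair_mem_sums G w U V' es' hes ht hconn hUV hdisj hbip htriv i j hiU hjV
    · rw [hform1, add_comm (Finsupp.single i 1)]
      exact pair_mem_sums G w U V' es' hes ht hconn hUV hdisj hbip htriv j i hjU hiV


end Comb

/-- Let `e = {e_1,…,e_{t-1}}` be a connected collection of edges of `G`
such that the induced subgraph on `N[e]` is bipartite with parts `U ∪ V'`, and assume the
weight function is trivial on all edges inside `N[e]`.  Then
`I(G_w)^t : (e_1 ⋯ e_{t-1}) = I(G̃_{w'})`, where `G̃` is the bipartite completion of `G`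
with respect to `e` (adding all edges between `U` and `V'`) and `w'` extends `w` by weight
`1` on the new edges. -/
theorem colon_product_edges_eq_bipartite_completion {V K : Type*} [Field K]
    (G : SimpleGraph V) (w : V → V → ℕ)
    (hsymm : ∀ i j, w i j = w j i) (hpos : ∀ i j, G.Adj i j → 0 < w i j)
    (t : ℕ) (ht : 2 ≤ t)
    (es : Fin (t - 1) → V × V) (hes : ∀ k, G.Adj (es k).1 (es k).2)
    (hconn : (edgesSubgraph G es hes).Connected)
    (U V' : Set V) (hUV : U ∪ V' = closedNbhd G es) (hdisj : Disjoint U V')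
    (hbip : ∀ i j, G.Adj i j → i ∈ closedNbhd G es → j ∈ closedNbhd G es →
      (i ∈ U ∧ j ∈ V') ∨ (i ∈ V' ∧ j ∈ U))
    (htriv : ∀ i j, G.Adj i j → i ∈ closedNbhd G es → j ∈ closedNbhd G es → w i j = 1) :
    (edgeIdealW (K := K) G w ^ t).colon
        ((Ideal.span {∏ k : Fin (t - 1), (X (es k).1 * X (es k).2)} :
          Ideal (MvPolynomial V K)) : Set (MvPolynomial V K)) =
      edgeIdealW (K := K)
        (G ⊔ SimpleGraph.fromRel (fun i j => i ∈ U ∧ j ∈ V'))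
        (fun i j => if G.Adj i j then w i j else 1) := by
  classical
  have hP : (∏ k : Fin (t - 1), (X (es k).1 * X (es k).2 : MvPolynomial V K))
      = monomial (pZero es) (1 : K) := by
    rw [pZero, ← prod_monomials]
    refine Finset.prod_congr rfl fun k _ => ?_
    rw [eVec, X, X, monomial_mul, one_mul]
  ext f
  simp only [edgeIdealW]
  rw [edgeIdealW_eq_span, edgeIdealW_eq_span, span_monomial_pow, hP,
    Ideal.mem_colon_span_singleton, mem_ideal_span_monomial_image,
    mem_ideal_span_monomial_image, support_mul_monomial]
  constructor
  · intro h d hd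
    obtain ⟨si, hsi, hle⟩ := h (d + pZero es)
      (Finset.mem_map.mpr ⟨d, hd, addRightEmbedding_apply _ _⟩)
    exact forward_lemma G w U V' ht es hes hUV hdisj hbip htriv d si hsi
      (by rwa [add_comm] at hle)
  · intro h d hd
    rw [Finset.mem_map] at hd
    obtain ⟨d₀, hd₀, rfl⟩ := hd
    obtain ⟨e', he', hle⟩ := h d₀ hd₀
    refine ⟨e' + pZero es,
      backward_lemma G w U V' es hes ht hconn hUV hdisj hbip htriv e' he', ?_⟩
    rw [addRightEmbedding_apply]
    exact add_le_add hle le_rfl
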